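/- arXiv:1411.7604 — 3 statements merged into one kernel-verified Lean document; each statement's English description precedes it below -/
import Mathlib

section
/- Let a ∈ ℝ be irrational and let R_a : ℝ/ℤ → ℝ/ℤ be the rotation R_a(x) = x + a (mod 1), where ℝ/ℤ carries the standard quotient metric. Then for every ε > 0 there exists an ε-pseudotrajectory (x_k)_{k≥0} of R_a such that for every p ∈ ℝ/ℤ one has sup_{k≥0} dist(x_k, R_a^k(p)) ≥ 1/4. In particular, R_a does not have the standard shadowing property. -/
open Filter Set

lemma dist_coe_le_abs (u v : ℝ) :
    dist ((u : UnitAddCircle)) ((v : UnitAddCircle)) ≤ |u - v| := by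
  rw [dist_eq_norm, ← QuotientAddGroup.mk_sub]
  simpa using QuotientAddGroup.norm_mk_le_norm (S := AddSubgroup.zmultiples (1 : ℝ)) (m := u - v)

lemma dist_le_half (x y : UnitAddCircle) : dist x y ≤ 1 / 2 := by
  rw [dist_eq_norm]
  simpa using AddCircle.norm_le_half_period (1 : ℝ) one_ne_zero (x := x - y)

lemma rot_iterate (a : ℝ) (k : ℕ) (p : UnitAddCircle) :
    (fun y : UnitAddCircle => y + a)^[k] p = p + (((k : ℝ) * a : ℝ) : UnitAddCircle) := by
  induction k with
  | zero => simp
  | succ k ih =>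
    rw [Function.iterate_succ_apply', ih]
    rw [add_assoc, ← AddCircle.coe_add]
    push_cast
    ring_nf

/-- An irrational rotation of the circle admits, for every ε > 0, an
ε-pseudotrajectory staying at (sup-)distance at least 1/4 from every exact
orbit; in particular it does not have the standard shadowing property. -/
theorem irrational_rotation_no_shadowing (a : ℝ) (ha : Irrational a) :
    (∀ ε > (0 : ℝ), ∃ x : ℕ → UnitAddCircle,
      (∀ k : ℕ, dist (x k + (a : UnitAddCircle)) (x (k + 1)) ≤ ε) ∧
      ∀ p : UnitAddCircle,
        (1 / 4 : ℝ) ≤ ⨆ k : ℕ, dist (x k) ((fun y : UnitAddCircle => y + a)^[k] p)) ∧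
    ¬ ∃ (ε₀ : ℝ) (σ : ℝ → ℝ), 0 < ε₀ ∧ (∀ ε > (0 : ℝ), 0 < σ ε) ∧
        Tendsto σ (nhdsWithin 0 (Ioi 0)) (nhds 0) ∧
        ∀ ε ∈ Ioo 0 ε₀, ∀ x : ℕ → UnitAddCircle,
          (∀ k : ℕ, dist (x k + (a : UnitAddCircle)) (x (k + 1)) ≤ ε) →
          ∃ p : UnitAddCircle,
            ∀ k : ℕ, dist (x k) ((fun y : UnitAddCircle => y + a)^[k] p) < σ ε := by
  have main : ∀ ε > (0 : ℝ), ∃ x : ℕ → UnitAddCircle,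
      (∀ k : ℕ, dist (x k + (a : UnitAddCircle)) (x (k + 1)) ≤ ε) ∧
      ∀ p : UnitAddCircle,
        (1 / 4 : ℝ) ≤ ⨆ k : ℕ, dist (x k) ((fun y : UnitAddCircle => y + a)^[k] p) := by
    intro ε hε
    obtain ⟨n, hn⟩ := exists_nat_gt (1 / (2 * ε))
    have hn0 : 0 < (n : ℝ) := lt_trans (by positivity) hn
    set δ : ℝ := 1 / (2 * n) with hδ
    have hδpos : 0 < δ := by positivity
    have hδε : δ ≤ ε := by
      rw [hδ, div_le_iff₀ (by positivity)]
      rw [div_lt_iff₀ (by positivity)] at hn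
      nlinarith
    refine ⟨fun k => (((k : ℝ) * (a + δ) : ℝ) : UnitAddCircle), ?_, ?_⟩
    · intro k
      have : ((((k : ℝ) * (a + δ) : ℝ) : UnitAddCircle)) + (a : UnitAddCircle)
          = ((((k : ℝ) * (a + δ) + a : ℝ)) : UnitAddCircle) := by
        rw [← AddCircle.coe_add]
      rw [this]
      refine le_trans (dist_coe_le_abs _ _) ?_
      have : |(k : ℝ) * (a + δ) + a - ((k : ℕ) + 1 : ℝ) * (a + δ)| = δ := by
        rw [show (k : ℝ) * (a + δ) + a - ((k : ℕ) + 1 : ℝ) * (a + δ) = -δ by push_cast; ring]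
        rw [abs_neg, abs_of_pos hδpos]
      push_cast at this ⊢
      rw [this]
      exact hδε
    · intro p
      have hbdd : BddAbove (Set.range fun k : ℕ =>
          dist ((((k : ℝ) * (a + δ) : ℝ) : UnitAddCircle)) ((fun y : UnitAddCircle => y + a)^[k] p)) :=
        ⟨1 / 2, by rintro _ ⟨k, rfl⟩; exact dist_le_half _ _⟩
      have hdist : ∀ k : ℕ,
          dist ((((k : ℝ) * (a + δ) : ℝ) : UnitAddCircle)) ((fun y : UnitAddCircle => y + a)^[k] p)
          = dist ((((k : ℝ) * δ : ℝ) : UnitAddCircle)) p := by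
        intro k
        rw [rot_iterate]
        have : ((((k : ℝ) * (a + δ) : ℝ)) : UnitAddCircle)
            = ((((k : ℝ) * δ : ℝ)) : UnitAddCircle) + ((((k : ℝ) * a : ℝ)) : UnitAddCircle) := by
          rw [← AddCircle.coe_add]; ring_nf
        rw [this, dist_add_right]
      -- two special indices: 0 and n
      have h0 : dist (((0 : ℝ) : UnitAddCircle)) p
          = dist ((((0 : ℕ) : ℝ) * (a + δ) : ℝ) : UnitAddCircle) ((fun y : UnitAddCircle => y + a)^[0] p) := by
        rw [hdist 0]; norm_num
      have hn2 : dist ((((1 : ℝ) / 2 : ℝ)) : UnitAddCircle) p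
          = dist ((((n : ℕ) : ℝ) * (a + δ) : ℝ) : UnitAddCircle) ((fun y : UnitAddCircle => y + a)^[n] p) := by
        rw [hdist n]
        have hval : (n : ℝ) * δ = 1 / 2 := by
          rw [hδ]
          field_simp
        rw [hval]
      have htri : (1 : ℝ) / 2 ≤ dist (((0 : ℝ) : UnitAddCircle)) p + dist ((((1 : ℝ) / 2 : ℝ)) : UnitAddCircle) p := by
        have := dist_triangle (((0 : ℝ) : UnitAddCircle)) p ((((1 : ℝ) / 2 : ℝ)) : UnitAddCircle)
        have heq : dist (((0 : ℝ) : UnitAddCircle)) ((((1 : ℝ) / 2 : ℝ)) : UnitAddCircle) = 1 / 2 := by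
          rw [dist_eq_norm, ← QuotientAddGroup.mk_sub]
          simpa using AddCircle.norm_half_period_eq (1 : ℝ)
        rw [heq] at this
        rw [dist_comm p] at this
        linarith
      rcases le_or_gt (1 / 4 : ℝ) (dist (((0 : ℝ) : UnitAddCircle)) p) with h | h
      · exact le_trans (h0 ▸ h) (le_ciSup hbdd 0)
      · have : (1 / 4 : ℝ) ≤ dist ((((1 : ℝ) / 2 : ℝ)) : UnitAddCircle) p := by linarith
        exact le_trans (hn2 ▸ this) (le_ciSup hbdd n)
  refine ⟨main, ?_⟩
  rintro ⟨ε₀, σ, hε₀, hσpos, htend, hshad⟩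
  have hev : ∀ᶠ ε in nhdsWithin 0 (Ioi 0), σ ε < 1 / 4 :=
    htend.eventually (gt_mem_nhds (by norm_num : (0 : ℝ) < 1 / 4))
  have hev2 : ∀ᶠ ε in nhdsWithin (0 : ℝ) (Ioi 0), ε ∈ Ioo 0 ε₀ := by
    filter_upwards [self_mem_nhdsWithin,
      eventually_nhdsWithin_of_eventually_nhds (eventually_lt_nhds hε₀)] with ε h1 h2
    exact ⟨h1, h2⟩
  obtain ⟨ε, hσε, hεIoo⟩ := (hev.and hev2).exists
  obtain ⟨x, hx, hfar⟩ := main ε hεIoo.1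
  obtain ⟨p, hp⟩ := hshad ε hεIoo x hx
  have : (1 / 4 : ℝ) ≤ σ ε := le_trans (hfar p) (ciSup_le fun k => (hp k).le)
  linarith
end

section
/- Let s ∈ [√2, 2) and 0 < ε ≤ 1 − s/2. Define the sequence (x_k)_{k≥0} in [0,1] by x_0 = 1/2 and x_k = f_s^{k−1}(s/2 + ε) for k ≥ 1. Then: (i) (x_k) is an ε-pseudotrajectory of f_s; (ii) if y ∈ [0,1] and ω ∈ (0, (s−1)/2] satisfy |x_k − f_s^k(y)| ≤ ω for all k ≥ 0, and n ∈ ℕ is such that for every 0 ≤ k < n the point 1/2 does not lie in the open interval with endpoints f_s^k(f_s^2(y)) and f_s^k(x_2), then ω ≥ s^{n+1}·ε. -/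
open Set

/-- The tent map with slope `s`, extended to all of ℝ. -/
noncomputable def tentMap (s x : ℝ) : ℝ := if x ≤ 1 / 2 then s * x else s * (1 - x)

lemma tentMap_of_le {s x : ℝ} (h : x ≤ 1 / 2) : tentMap s x = s * x := if_pos h

lemma tentMap_of_gt {s x : ℝ} (h : ¬ x ≤ 1 / 2) : tentMap s x = s * (1 - x) := if_neg h

lemma tentMap_of_ge {s x : ℝ} (h : 1 / 2 ≤ x) : tentMap s x = s * (1 - x) := by
  unfold tentMap
  split
  · have : x = 1 / 2 := le_antisymm ‹_› h
    subst this; norm_num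
  · rfl

lemma tent_eq (s a : ℝ) : tentMap s a = s * (1 / 2 - |a - 1 / 2|) := by
  unfold tentMap
  split
  · rw [abs_of_nonpos (by linarith)]; ring
  · rw [abs_of_pos (by linarith)]; ring

lemma tent_expand {s a b : ℝ} (hs : 0 ≤ s)
    (h : (a ≤ 1 / 2 ∧ b ≤ 1 / 2) ∨ (1 / 2 ≤ a ∧ 1 / 2 ≤ b)) :
    |tentMap s a - tentMap s b| = s * |a - b| := by
  rcases h with ⟨ha, hb⟩ | ⟨ha, hb⟩
  · rw [tentMap_of_le ha, tentMap_of_le hb, ← mul_sub, abs_mul, abs_of_nonneg hs]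
  · rw [tentMap_of_ge ha, tentMap_of_ge hb,
      show s * (1 - a) - s * (1 - b) = s * (b - a) by ring, abs_mul,
      abs_of_nonneg hs, abs_sub_comm]

/-- The pseudotrajectory obtained by pushing the critical value up by ε is an
ε-pseudotrajectory, and shadowing it with accuracy ω forces ω ≥ s^{n+1}·ε
as long as the pushed orbit and the exact orbit stay on one side of the
critical point. -/
theorem tent_map_critical_pseudotrajectory_lower_bound
    (s : ℝ) (hs : Real.sqrt 2 ≤ s) (hs2 : s < 2)
    (ε : ℝ) (hε : 0 < ε) (hε' : ε ≤ 1 - s / 2)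
    (x : ℕ → ℝ)
    (hx0 : x 0 = 1 / 2)
    (hxk : ∀ k : ℕ, 1 ≤ k → x k = (tentMap s)^[k - 1] (s / 2 + ε)) :
    (∀ k : ℕ, |tentMap s (x k) - x (k + 1)| ≤ ε) ∧
    ∀ y ∈ Icc (0 : ℝ) 1, ∀ ω : ℝ, 0 < ω → ω ≤ (s - 1) / 2 →
      (∀ k : ℕ, |x k - (tentMap s)^[k] y| ≤ ω) →
      ∀ n : ℕ,
        (∀ k < n, (1 / 2 : ℝ) ∉
          Ioo (min ((tentMap s)^[k] ((tentMap s)^[2] y)) ((tentMap s)^[k] (x 2)))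
              (max ((tentMap s)^[k] ((tentMap s)^[2] y)) ((tentMap s)^[k] (x 2)))) →
        s ^ (n + 1) * ε ≤ ω := by
  have h1 : (1 : ℝ) < Real.sqrt 2 := by
    rw [show (1 : ℝ) = Real.sqrt 1 from Real.sqrt_one.symm]
    exact Real.sqrt_lt_sqrt (by norm_num) (by norm_num)
  have hs1 : 1 < s := lt_of_lt_of_le h1 hs
  have hs0 : (0 : ℝ) ≤ s := by linarith
  set v : ℝ := s / 2 + ε with hv
  have hx1 : x 1 = v := by rw [hxk 1 le_rfl]; simp
  have hvhalf : ¬ v ≤ 1 / 2 := by simp only [hv]; push_neg; nlinarith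
  have hx2 : x 2 = s * (1 - v) := by
    rw [hxk 2 (by norm_num)]
    show (tentMap s)^[1] v = _
    rw [Function.iterate_one, tentMap_of_gt hvhalf]
  constructor
  · intro k
    rcases Nat.eq_zero_or_pos k with rfl | hk
    · rw [hx0, hxk 1 le_rfl]
      show |tentMap s (1 / 2) - (tentMap s)^[0] v| ≤ ε
      rw [Function.iterate_zero, id_eq, tentMap_of_le le_rfl,
        show s * (1 / 2) - v = -ε by rw [hv]; ring, abs_neg, abs_of_pos hε]
    · rw [hxk k hk, hxk (k + 1) (by omega), show k + 1 - 1 = (k - 1) + 1 by omega,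
        Function.iterate_succ_apply']
      simpa using hε.le
  · intro y hy ω hω hω' hsh n hn
    have hfy : tentMap s y = s * (1 / 2 - |y - 1 / 2|) := tent_eq s y
    have key1 : v - tentMap s y = ε + s * |y - 1 / 2| := by rw [hfy, hv]; ring
    have habs : 0 ≤ s * |y - 1 / 2| := mul_nonneg hs0 (abs_nonneg _)
    have hvfy : v - tentMap s y ≤ ω := by
      have h := hsh 1
      rw [hx1, Function.iterate_one] at h
      exact le_trans (le_abs_self _) h
    have hfy_half : ¬ tentMap s y ≤ 1 / 2 := by
      push_neg
      have h2 : v - tentMap s y ≤ (s - 1) / 2 := le_trans hvfy hω'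
      simp only [hv] at h2; linarith
    have hf2y : (tentMap s)^[2] y = s * (1 - tentMap s y) := by
      show tentMap s (tentMap s y) = _
      rw [tentMap_of_gt hfy_half]
    have hd0 : |x 2 - (tentMap s)^[2] y| = s * (v - tentMap s y) := by
      rw [hx2, hf2y, show s * (1 - v) - s * (1 - tentMap s y) = -(s * (v - tentMap s y)) by
        ring, abs_neg, abs_of_nonneg (mul_nonneg hs0 (by rw [key1]; linarith))]
    have hD : ∀ k, k ≤ n → s ^ (k + 1) * ε ≤
        |(tentMap s)^[k] (x 2) - (tentMap s)^[k] ((tentMap s)^[2] y)| := by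
      intro k
      induction k with
      | zero =>
        intro _
        simp only [Function.iterate_zero, id_eq, zero_add, pow_one, hd0]
        have hεv : ε ≤ v - tentMap s y := by rw [key1]; linarith
        exact mul_le_mul_of_nonneg_left hεv hs0
      | succ k ih =>
        intro hk
        have hD' := ih (by omega)
        have hsep := hn k (by omega)
        rw [mem_Ioo, not_and_or, not_lt, not_lt] at hsep
        have hcase : ((tentMap s)^[k] (x 2) ≤ 1 / 2 ∧
              (tentMap s)^[k] ((tentMap s)^[2] y) ≤ 1 / 2) ∨
            (1 / 2 ≤ (tentMap s)^[k] (x 2) ∧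
              1 / 2 ≤ (tentMap s)^[k] ((tentMap s)^[2] y)) := by
          rcases hsep with h | h
          · exact Or.inr ⟨le_trans h (min_le_right _ _), le_trans h (min_le_left _ _)⟩
          · exact Or.inl ⟨le_trans (le_max_right _ _) h, le_trans (le_max_left _ _) h⟩
        rw [Function.iterate_succ_apply', Function.iterate_succ_apply',
          tent_expand hs0 hcase]
        calc s ^ (k + 1 + 1) * ε = s * (s ^ (k + 1) * ε) := by ring
          _ ≤ s * |(tentMap s)^[k] (x 2) - (tentMap s)^[k] ((tentMap s)^[2] y)| :=
            mul_le_mul_of_nonneg_left hD' hs0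
    have hfin := hsh (n + 2)
    have hxn2 : x (n + 2) = (tentMap s)^[n] (x 2) := by
      rw [hxk (n + 2) (by omega), show n + 2 - 1 = n + 1 from rfl,
        Function.iterate_succ_apply, tentMap_of_gt hvhalf, hx2]
    have hyn2 : (tentMap s)^[n + 2] y = (tentMap s)^[n] ((tentMap s)^[2] y) :=
      Function.iterate_add_apply _ n 2 y
    rw [hxn2, hyn2] at hfin
    exact le_trans (hD n le_rfl) hfin
end

section
/- The set of parameters s ∈ [√2,2] for which the critical point 1/2 is periodic under the tent map f_s (i.e. there exists N ≥ 1 with f_s^N(1/2) = 1/2) is dense in [√2,2] and has Lebesgue measure zero. -/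
open Set MeasureTheory

namespace TentAux

open Filter Polynomial

lemma tentMap_of_le {s x : ℝ} (h : x ≤ 1/2) : tentMap s x = s * x := if_pos h

lemma tentMap_of_gt {s x : ℝ} (h : 1/2 < x) : tentMap s x = s * (1 - x) := if_neg (not_le.2 h)

lemma tent_cont : Continuous (fun p : ℝ × ℝ => tentMap p.1 p.2) := by
  unfold tentMap
  apply Continuous.if_le
  · exact continuous_fst.mul continuous_snd
  · exact continuous_fst.mul (continuous_const.sub continuous_snd)
  · exact continuous_snd
  · exact continuous_const
  · intro p hp
    rw [hp]; ring

lemma orb_cont (N : ℕ) : Continuous (fun s : ℝ => (tentMap s)^[N] (1/2 : ℝ)) := by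
  induction N with
  | zero => simpa using continuous_const
  | succ n ih =>
      have h : (fun s : ℝ => (tentMap s)^[n+1] (1/2 : ℝ))
          = fun s => tentMap s ((tentMap s)^[n] (1/2)) := by
        funext s; rw [Function.iterate_succ_apply']
      rw [h]
      exact tent_cont.comp (continuous_id.prodMk ih)

lemma orb_mem {s : ℝ} (hs0 : 0 ≤ s) (hs2 : s ≤ 2) (N : ℕ) :
    (tentMap s)^[N] (1/2 : ℝ) ∈ Icc (0:ℝ) 1 := by
  induction N with
  | zero => constructor <;> norm_num
  | succ n ih =>
      rw [Function.iterate_succ_apply']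
      obtain ⟨h0, h1⟩ := ih
      set x := (tentMap s)^[n] (1/2 : ℝ) with hx
      unfold tentMap
      split_ifs with h
      · exact ⟨by positivity, by nlinarith⟩
      · push_neg at h
        exact ⟨by nlinarith, by nlinarith⟩

/-- Sign sequence attached to a symbol sequence. -/
def signSeq (σ : ℕ → Bool) : ℕ → ℝ
  | 0 => 1
  | n+1 => if σ n then -(signSeq σ n) else signSeq σ n

def coefSeq (σ : ℕ → Bool) (n : ℕ) : ℝ := if σ n then signSeq σ n else 0

lemma signSeq_cases (σ : ℕ → Bool) (n : ℕ) : signSeq σ n = 1 ∨ signSeq σ n = -1 := by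
  induction n with
  | zero => left; rfl
  | succ n ih =>
      rcases ih with h | h <;> by_cases hb : σ n <;> simp [signSeq, hb, h]

lemma abs_signSeq (σ : ℕ → Bool) (n : ℕ) : |signSeq σ n| = 1 := by
  rcases signSeq_cases σ n with h | h <;> rw [h] <;> norm_num

lemma abs_coefSeq (σ : ℕ → Bool) (n : ℕ) : |coefSeq σ n| ≤ 1 := by
  unfold coefSeq
  split_ifs
  · rw [abs_signSeq]
  · norm_num

lemma sqrt2_lt_two : Real.sqrt 2 < 2 := by
  nlinarith [Real.sq_sqrt (by norm_num : (0:ℝ) ≤ 2), Real.sqrt_nonneg 2]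

lemma one_lt_sqrt2 : (1:ℝ) < Real.sqrt 2 := by
  nlinarith [Real.sq_sqrt (by norm_num : (0:ℝ) ≤ 2), Real.sqrt_nonneg 2]

/-- Main density lemma: every nondegenerate subinterval of `[√2,2]` contains a
parameter for which the critical point is periodic. -/
lemma exists_periodic {a b : ℝ} (ha : Real.sqrt 2 ≤ a) (hab : a < b) (hb : b ≤ 2) :
    ∃ s ∈ Icc a b, ∃ N : ℕ, 1 ≤ N ∧ (tentMap s)^[N] (1/2 : ℝ) = 1/2 := by
  classical
  by_contra hcon
  push_neg at hcon
  have h : ∀ s ∈ Icc a b, ∀ N : ℕ, 1 ≤ N → (tentMap s)^[N] (1/2 : ℝ) ≠ 1/2 := by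
    intro s hs N hN
    exact hcon s hs N hN
  have h1a : (1:ℝ) < a := lt_of_lt_of_le one_lt_sqrt2 ha
  have ha0 : (0:ℝ) < a := by linarith
  -- symbol sequence
  set σ : ℕ → Bool := fun N => decide ((1:ℝ)/2 < (tentMap a)^[N] (1/2)) with hσdef
  -- dichotomy: the symbol is the same for all parameters in [a,b]
  have hsym : ∀ (N : ℕ) (s : ℝ), s ∈ Icc a b →
      ((1:ℝ)/2 < (tentMap a)^[N] (1/2) ↔ (1:ℝ)/2 < (tentMap s)^[N] (1/2)) := by
    intro N s hs
    rcases Nat.eq_zero_or_pos N with h0 | hN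
    · subst h0; simp
    constructor
    · intro hFa
      by_contra hle
      push_neg at hle
      have hle' : (tentMap s)^[N] (1/2 : ℝ) ≤ 1/2 := hle
      have hmem : (1/2 : ℝ) ∈ uIcc ((tentMap a)^[N] (1/2 : ℝ)) ((tentMap s)^[N] (1/2 : ℝ)) := by
        rw [mem_uIcc]; right; exact ⟨hle', le_of_lt hFa⟩
      obtain ⟨t, ht, hFt⟩ := intermediate_value_uIcc
        ((orb_cont N).continuousOn (s := uIcc a s)) hmem
      have hts : t ∈ Icc a b := by
        rw [uIcc_of_le hs.1] at ht
        exact ⟨ht.1, le_trans ht.2 hs.2⟩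
      exact h t hts N hN hFt
    · intro hFs
      by_contra hle
      push_neg at hle
      have hmem : (1/2 : ℝ) ∈ uIcc ((tentMap a)^[N] (1/2 : ℝ)) ((tentMap s)^[N] (1/2 : ℝ)) := by
        rw [mem_uIcc]; left; exact ⟨hle, le_of_lt hFs⟩
      obtain ⟨t, ht, hFt⟩ := intermediate_value_uIcc
        ((orb_cont N).continuousOn (s := uIcc a s)) hmem
      have hts : t ∈ Icc a b := by
        rw [uIcc_of_le hs.1] at ht
        exact ⟨ht.1, le_trans ht.2 hs.2⟩
      exact h t hts N hN hFt
  -- branch computation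
  have hbranch : ∀ (N : ℕ) (s : ℝ), s ∈ Icc a b →
      (tentMap s)^[N+1] (1/2 : ℝ) =
        if σ N then s * (1 - (tentMap s)^[N] (1/2 : ℝ)) else s * ((tentMap s)^[N] (1/2 : ℝ)) := by
    intro N s hs
    rw [Function.iterate_succ_apply']
    by_cases hσ : σ N = true
    · have hlt : (1:ℝ)/2 < (tentMap s)^[N] (1/2) := by
        apply (hsym N s hs).1
        have h' := hσ
        simp only [hσdef, decide_eq_true_eq] at h'
        exact h'
      rw [if_pos hσ, tentMap_of_gt hlt]
    · have hle : (tentMap s)^[N] (1/2 : ℝ) ≤ 1/2 := by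
        by_contra hgt
        push_neg at hgt
        have hgt' : (1:ℝ)/2 < (tentMap a)^[N] (1/2) := (hsym N s hs).2 hgt
        have : σ N = true := by
          simp only [hσdef, decide_eq_true_eq]
          exact hgt'
        exact hσ this
      rw [if_neg hσ, tentMap_of_le hle]
  -- key invariant
  have key : ∀ (N : ℕ) (s : ℝ), s ∈ Icc a b →
      signSeq σ N * ((tentMap s)^[N] (1/2 : ℝ)) * (s⁻¹) ^ N
        = 1/2 - ∑ k ∈ Finset.range N, coefSeq σ k * (s⁻¹) ^ k := by
    intro N
    induction N with
    | zero => intro s hs; simp [signSeq]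
    | succ n ih =>
        intro s hs
        have hspos : 0 < s := lt_of_lt_of_le ha0 hs.1
        have hss : s * s⁻¹ = 1 := mul_inv_cancel₀ hspos.ne'
        have ihs := ih s hs
        rw [hbranch n s hs, Finset.sum_range_succ, pow_succ]
        by_cases hσ : σ n = true
        · have hsign : signSeq σ (n+1) = -(signSeq σ n) := by simp [signSeq, hσ]
          have hcoef : coefSeq σ n = signSeq σ n := by simp [coefSeq, hσ]
          rw [if_pos hσ, hsign, hcoef]
          set E := signSeq σ n
          set X := (tentMap s)^[n] (1/2 : ℝ)
          set Y := (s⁻¹ : ℝ) ^ n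
          -- goal: -E * (s * (1 - X)) * (Y * s⁻¹) = 1/2 - (∑ + E * Y)
          -- ihs : E * X * Y = 1/2 - ∑
          linear_combination ihs + (-(E) * (1 - X) * Y) * hss
        · have hsign : signSeq σ (n+1) = signSeq σ n := by simp [signSeq, hσ]
          have hcoef : coefSeq σ n = 0 := by simp [coefSeq, hσ]
          rw [if_neg hσ, hsign, hcoef]
          set E := signSeq σ n
          set X := (tentMap s)^[n] (1/2 : ℝ)
          set Y := (s⁻¹ : ℝ) ^ n
          linear_combination ihs + (E * X * Y) * hss
  -- the bound
  have hbound : ∀ (N : ℕ) (s : ℝ), s ∈ Icc a b →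
      |1/2 - ∑ k ∈ Finset.range N, coefSeq σ k * (s⁻¹) ^ k| ≤ (s⁻¹) ^ N := by
    intro N s hs
    have hspos : 0 < s := lt_of_lt_of_le ha0 hs.1
    rw [← key N s hs, abs_mul, abs_mul, abs_signSeq, one_mul]
    have hmem := orb_mem (le_of_lt hspos) (le_trans hs.2 hb) N
    have h1 : |(tentMap s)^[N] (1/2 : ℝ)| ≤ 1 := by
      rw [abs_le]; exact ⟨by linarith [hmem.1], hmem.2⟩
    have h2 : |(s⁻¹ : ℝ) ^ N| = (s⁻¹) ^ N := abs_of_nonneg (by positivity)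
    rw [h2]
    nlinarith [pow_nonneg (le_of_lt (inv_pos.2 hspos)) N]
  -- coefficient sequence of the power series
  set A : ℕ → ℝ := fun k => if k = 0 then 1/2 else -(coefSeq σ k) with hAdef
  have hA : ∀ k, |A k| ≤ 1 := by
    intro k
    by_cases hk : k = 0
    · have hAk : A k = 1/2 := by simp [hAdef, hk]
      rw [hAk, abs_le]; constructor <;> norm_num
    · have hAk : A k = -(coefSeq σ k) := by simp [hAdef, hk]
      rw [hAk, abs_neg]; exact abs_coefSeq σ k
  have hcoef0 : coefSeq σ 0 = 0 := by
    have : σ 0 = false := by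
      simp [hσdef]
    simp [coefSeq, this]
  -- partial sums identity
  have hpartial : ∀ (N : ℕ) (x : ℝ),
      ∑ k ∈ Finset.range (N+1), A k * x ^ k
        = 1/2 - ∑ k ∈ Finset.range (N+1), coefSeq σ k * x ^ k := by
    intro N x
    have hAk : ∀ k, A k = (if k = 0 then (1:ℝ)/2 else 0) - coefSeq σ k := by
      intro k
      simp only [hAdef]
      split_ifs with hk
      · subst hk; rw [hcoef0]; ring
      · ring
    calc ∑ k ∈ Finset.range (N+1), A k * x ^ k
        = ∑ k ∈ Finset.range (N+1),
            ((if k = 0 then (1:ℝ)/2 else 0) * x ^ k - coefSeq σ k * x ^ k) := by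
          apply Finset.sum_congr rfl
          intro k _
          rw [hAk k]; ring
      _ = ∑ k ∈ Finset.range (N+1), (if k = 0 then (1:ℝ)/2 else 0) * x ^ k
            - ∑ k ∈ Finset.range (N+1), coefSeq σ k * x ^ k := Finset.sum_sub_distrib _ _
      _ = 1/2 - ∑ k ∈ Finset.range (N+1), coefSeq σ k * x ^ k := by
          congr 1
          rw [Finset.sum_eq_single 0]
          · simp
          · intro k _ hk; simp [hk]
          · intro hk; simp at hk
  -- the formal power series
  set p := FormalMultilinearSeries.ofScalars ℝ A with hpdef
  have hrad : 1 ≤ p.radius := by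
    apply FormalMultilinearSeries.le_radius_of_bound _ 1
    intro n
    rw [FormalMultilinearSeries.ofScalars_norm]
    simp only [NNReal.coe_one, one_pow, mul_one, Real.norm_eq_abs]
    exact hA n
  have hball : HasFPowerSeriesOnBall p.sum p 0 p.radius :=
    p.hasFPowerSeriesOnBall (lt_of_lt_of_le zero_lt_one hrad)
  have hsum_eval : ∀ x : ℝ, |x| < 1 → HasSum (fun n => A n * x ^ n) (p.sum x) := by
    intro x hx
    have hsummable : Summable (fun n => A n * x ^ n) := by
      apply Summable.of_norm_bounded (g := fun n => |x| ^ n)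
        (summable_geometric_of_lt_one (abs_nonneg x) hx)
      intro n
      rw [norm_mul, Real.norm_eq_abs, Real.norm_eq_abs, abs_pow]
      have := hA n
      nlinarith [abs_nonneg x, pow_nonneg (abs_nonneg x) n, abs_nonneg (A n)]
    have heq : p.sum x = ∑' n, A n * x ^ n := by
      apply tsum_congr
      intro n
      rw [FormalMultilinearSeries.ofScalars_apply_eq, smul_eq_mul]
    rw [heq]
    exact hsummable.hasSum
  -- vanishing on the interval
  have hzero : ∀ s ∈ Icc a b, p.sum s⁻¹ = 0 := by
    intro s hs
    have hspos : 0 < s := lt_of_lt_of_le ha0 hs.1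
    have hs1 : 1 < s := lt_of_lt_of_le h1a hs.1
    have hx0 : 0 < s⁻¹ := inv_pos.2 hspos
    have hx1 : s⁻¹ < 1 := by
      rw [inv_lt_one_iff₀]; right; exact hs1
    have habs : |s⁻¹| < 1 := by rw [abs_of_pos hx0]; exact hx1
    have hT1 := (hsum_eval s⁻¹ habs).tendsto_sum_nat
    have hT2 : Tendsto (fun N => ∑ k ∈ Finset.range N, A k * s⁻¹ ^ k) atTop (nhds 0) := by
      refine squeeze_zero_norm' (a := fun N => (s⁻¹ : ℝ) ^ N) ?_
        (tendsto_pow_atTop_nhds_zero_of_lt_one (le_of_lt hx0) hx1)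
      filter_upwards [eventually_ge_atTop 1] with N hN
      obtain ⟨M, rfl⟩ := Nat.exists_eq_add_of_le hN
      rw [add_comm]
      rw [Real.norm_eq_abs, hpartial M s⁻¹]
      exact hbound (M+1) s hs
    exact tendsto_nhds_unique hT1 hT2
  -- identity theorem
  have hU : AnalyticOnNhd ℝ p.sum (Metric.ball (0:ℝ) 1) := by
    apply hball.analyticOnNhd.mono
    intro x hx
    rw [EMetric.mem_ball, edist_dist]
    refine lt_of_lt_of_le ?_ hrad
    have h1 : (1 : ENNReal) = ENNReal.ofReal 1 := by simp
    rw [h1, ENNReal.ofReal_lt_ofReal_iff one_pos]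
    simpa using hx
  have hmid : ((a+b)/2)⁻¹ ∈ Metric.ball (0:ℝ) 1 := by
    have hab2 : 1 < (a+b)/2 := by linarith
    have : ((a+b)/2)⁻¹ < 1 := by
      rw [inv_lt_one_iff₀]; right; exact hab2
    have hpos : 0 < ((a+b)/2)⁻¹ := by positivity
    simp only [Metric.mem_ball, Real.dist_eq, sub_zero]
    rw [abs_of_pos hpos]; exact this
  have hev : p.sum =ᶠ[nhds (((a+b)/2)⁻¹)] 0 := by
    have hopen : IsOpen (Ioo b⁻¹ a⁻¹) := isOpen_Ioo
    have hbpos : 0 < b := by linarith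
    have hmidmem : ((a+b)/2)⁻¹ ∈ Ioo b⁻¹ a⁻¹ := by
      constructor
      · apply inv_strictAnti₀
        · linarith
        · linarith
      · apply inv_strictAnti₀
        · positivity
        · linarith
    filter_upwards [hopen.mem_nhds hmidmem] with x hx
    have hxpos : 0 < x := lt_trans (by positivity) hx.1
    have hsx : x⁻¹ ∈ Icc a b := by
      constructor
      · rw [← inv_inv a]
        apply inv_anti₀ hxpos (le_of_lt hx.2)
      · rw [← inv_inv b]
        apply inv_anti₀ (by positivity) (le_of_lt hx.1)
    have := hzero x⁻¹ hsx
    rwa [inv_inv] at this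
  have heqon : EqOn p.sum 0 (Metric.ball (0:ℝ) 1) :=
    hU.eqOn_zero_of_preconnected_of_eventuallyEq_zero
      (convex_ball (0:ℝ) 1).isPreconnected hmid hev
  have h0mem : (0:ℝ) ∈ Metric.ball (0:ℝ) 1 := Metric.mem_ball_self one_pos
  have hval : p.sum 0 = 0 := heqon h0mem
  have hval2 : p.sum 0 = 1/2 := by
    have h1 : p.sum 0 = ∑' n, A n * (0:ℝ) ^ n := by
      apply tsum_congr
      intro n
      rw [FormalMultilinearSeries.ofScalars_apply_eq, smul_eq_mul]
    rw [h1, tsum_eq_single 0]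
    · simp [hAdef]
    · intro n hn
      rw [zero_pow hn, mul_zero]
  rw [hval] at hval2
  norm_num at hval2

/-- Piecewise polynomials realizing iterates of the tent map. -/
noncomputable def tentPoly : List Bool → Polynomial ℝ
  | [] => Polynomial.C (1/2 : ℝ)
  | b :: l => if b then Polynomial.X * (1 - tentPoly l) else Polynomial.X * tentPoly l

lemma tentPoly_true (l : List Bool) :
    tentPoly (true :: l) = Polynomial.X * (1 - tentPoly l) := rfl

lemma tentPoly_false (l : List Bool) :
    tentPoly (false :: l) = Polynomial.X * tentPoly l := rfl

lemma tentPoly_itinerary (s : ℝ) (N : ℕ) :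
    ∃ l : List Bool, l.length = N ∧ (tentPoly l).eval s = (tentMap s)^[N] (1/2 : ℝ) := by
  induction N with
  | zero => exact ⟨[], rfl, by simp [tentPoly]⟩
  | succ n ih =>
      obtain ⟨l, hl, he⟩ := ih
      by_cases hx : (tentMap s)^[n] (1/2 : ℝ) ≤ 1/2
      · refine ⟨false :: l, by simp [hl], ?_⟩
        rw [Function.iterate_succ_apply']
        rw [tentPoly_false, tentMap_of_le hx]
        simp [he]
      · refine ⟨true :: l, by simp [hl], ?_⟩
        rw [Function.iterate_succ_apply']
        push_neg at hx
        rw [tentPoly_true, tentMap_of_gt hx]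
        simp [he]

lemma tentPoly_coeff (l : List Bool) :
    (tentPoly l).coeff l.length = 1/2 ∨ (tentPoly l).coeff l.length = -(1/2) := by
  induction l with
  | nil => left; simp [tentPoly]
  | cons b l ih =>
      cases b
      · rw [tentPoly_false, List.length_cons, Polynomial.coeff_X_mul]
        exact ih
      · rw [tentPoly_true, List.length_cons, Polynomial.coeff_X_mul,
          Polynomial.coeff_sub, Polynomial.coeff_one]
        by_cases hl : l.length = 0
        · have hnil : l = [] := List.length_eq_zero_iff.mp hl
          subst hnil
          left
          norm_num [tentPoly]
        · rcases ih with hc | hc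
          · right; rw [if_neg hl, hc]; ring
          · left; rw [if_neg hl, hc]; ring

lemma null_aux :
    volume {s : ℝ | ∃ N : ℕ, 1 ≤ N ∧ (tentMap s)^[N] (1/2 : ℝ) = 1/2} = 0 := by
  have hnull : volume (⋃ (l : List Bool) (_ : l ≠ []),
      {s : ℝ | (tentPoly l).eval s = 1/2}) = 0 := by
    apply measure_iUnion_null
    intro l
    apply measure_iUnion_null
    intro hl
    have hlen : 1 ≤ l.length := by
      rcases l with _ | ⟨b, l⟩
      · exact absurd rfl hl
      · simp
    set q := tentPoly l - Polynomial.C (1/2 : ℝ) with hq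
    have hqne : q ≠ 0 := by
      intro h0
      have hc : q.coeff l.length = 0 := by rw [h0]; simp
      rw [hq, Polynomial.coeff_sub, Polynomial.coeff_C, if_neg (by omega)] at hc
      rcases tentPoly_coeff l with hcc | hcc <;> rw [hcc] at hc <;> norm_num at hc
    have hset : {s : ℝ | (tentPoly l).eval s = 1/2} = {x : ℝ | q.IsRoot x} := by
      ext x
      simp only [mem_setOf_eq, Polynomial.IsRoot, hq, Polynomial.eval_sub, Polynomial.eval_C]
      constructor
      · intro h; rw [h]; ring
      · intro h; linarith
    rw [hset]
    exact (Polynomial.finite_setOf_isRoot hqne).measure_zero _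
  refine measure_mono_null ?_ hnull
  intro s hs
  obtain ⟨N, hN, hfix⟩ := hs
  obtain ⟨l, hl, he⟩ := tentPoly_itinerary s N
  have hlne : l ≠ [] := by
    intro hnil
    rw [hnil] at hl
    simp at hl
    omega
  exact mem_iUnion₂.2 ⟨l, hlne, by rw [mem_setOf_eq, he, hfix]⟩

end TentAux

/-- The set of parameters s ∈ [√2,2] for which the critical point 1/2 is
periodic under f_s is dense in [√2,2] and has Lebesgue measure zero. -/
theorem tent_map_periodic_parameters_dense_and_null :
    Icc (Real.sqrt 2) 2 ⊆
      closure {s : ℝ | s ∈ Icc (Real.sqrt 2) 2 ∧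
        ∃ N : ℕ, 1 ≤ N ∧ (tentMap s)^[N] (1 / 2) = 1 / 2} ∧
    volume {s : ℝ | s ∈ Icc (Real.sqrt 2) 2 ∧
        ∃ N : ℕ, 1 ≤ N ∧ (tentMap s)^[N] (1 / 2) = 1 / 2} = 0 := by
  constructor
  · intro s0 hs0
    rw [Metric.mem_closure_iff]
    intro ε hε
    have hs2 : Real.sqrt 2 < 2 := TentAux.sqrt2_lt_two
    set δ : ℝ := min (ε/2) ((2 - Real.sqrt 2)/2) with hδdef
    have hδpos : 0 < δ := by
      apply lt_min
      · linarith
      · linarith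
    set a : ℝ := max (Real.sqrt 2) (s0 - δ) with hadef
    set b : ℝ := min 2 (s0 + δ) with hbdef
    have ha : Real.sqrt 2 ≤ a := le_max_left _ _
    have hb : b ≤ 2 := min_le_left _ _
    have hab : a < b := by
      apply max_lt <;> apply lt_min
      · exact hs2
      · linarith [hs0.1]
      · linarith [hs0.2]
      · linarith
    obtain ⟨s, hsmem, N, hN, hfix⟩ := TentAux.exists_periodic ha hab hb
    refine ⟨s, ⟨⟨le_trans ha hsmem.1, le_trans hsmem.2 hb⟩, N, hN, hfix⟩, ?_⟩
    have h1 : s0 - δ ≤ s := le_trans (le_max_right _ _) hsmem.1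
    have h2 : s ≤ s0 + δ := le_trans hsmem.2 (min_le_right _ _)
    have hδε : δ ≤ ε/2 := min_le_left _ _
    rw [Real.dist_eq, abs_lt]
    constructor <;> linarith
  · exact measure_mono_null (fun s hs => hs.2) TentAux.null_aux
end
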